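/- Let λ > 0 and P ∈ ℝ, and let ψ be a strictly positive classical solution of the homogeneous Euler ODE with parameters (λ, P) on an interval (a, b), with (constant) Bernoulli function B. Define ψ̃(θ) := ψ(θ/λ)^{1/λ} for θ ∈ (λa, λb). Then ψ̃ is a strictly positive classical solution of the homogeneous Euler ODE with parameters (λ̃, P̃) where λ̃ = 1/λ and P̃ = −B/(2λ⁴), and the Bernoulli function of ψ̃ equals B̃ = −2P/λ⁴. -/

import Mathlib

open Real Set

/-- Conjugacy: if `ψ` is a strictly positive classical solution of the
homogeneous Euler ODE on `(a,b)` with parameters `(λ, P)` and constant Bernoulli function `B`,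
then `ψ̃(θ) = ψ(θ/λ)^{1/λ}` is a strictly positive classical solution on `(λa, λb)` with
parameters `λ̃ = 1/λ`, `P̃ = -B/(2λ⁴)`, and its Bernoulli function equals `B̃ = -2P/λ⁴`. -/
theorem conjugacy
    (lam P B : ℝ) (hlam : 0 < lam)
    (a b : ℝ) (hab : a < b) (ψ ψ' ψ'' : ℝ → ℝ)
    (hpos : ∀ θ ∈ Set.Ioo a b, 0 < ψ θ)
    (hd1 : ∀ θ ∈ Set.Ioo a b, HasDerivAt ψ (ψ' θ) θ)
    (hd2 : ∀ θ ∈ Set.Ioo a b, HasDerivAt ψ' (ψ'' θ) θ)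
    (hode : ∀ θ ∈ Set.Ioo a b, 2 * (lam - 1) * P =
      -(lam - 1) * (ψ' θ) ^ 2 + lam ^ 2 * (ψ θ) ^ 2 + lam * (ψ'' θ) * (ψ θ))
    (hB : ∀ θ ∈ Set.Ioo a b,
      (2 * P + lam ^ 2 * (ψ θ) ^ 2 + (ψ' θ) ^ 2) * (ψ θ) ^ (2 / lam - 2) = B) :
    ∃ φ' φ'' : ℝ → ℝ,
      (∀ θ ∈ Set.Ioo (lam * a) (lam * b), 0 < ψ (θ / lam) ^ (1 / lam)) ∧
      (∀ θ ∈ Set.Ioo (lam * a) (lam * b),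
        HasDerivAt (fun t => ψ (t / lam) ^ (1 / lam)) (φ' θ) θ) ∧
      (∀ θ ∈ Set.Ioo (lam * a) (lam * b), HasDerivAt φ' (φ'' θ) θ) ∧
      (∀ θ ∈ Set.Ioo (lam * a) (lam * b),
        2 * (1 / lam - 1) * (-B / (2 * lam ^ 4)) =
          -(1 / lam - 1) * (φ' θ) ^ 2 + (1 / lam) ^ 2 * (ψ (θ / lam) ^ (1 / lam)) ^ 2 +
            (1 / lam) * (φ'' θ) * (ψ (θ / lam) ^ (1 / lam))) ∧
      (∀ θ ∈ Set.Ioo (lam * a) (lam * b),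
        (2 * (-B / (2 * lam ^ 4)) + (1 / lam) ^ 2 * (ψ (θ / lam) ^ (1 / lam)) ^ 2 + (φ' θ) ^ 2) *
            (ψ (θ / lam) ^ (1 / lam)) ^ (2 / (1 / lam) - 2) =
          -2 * P / lam ^ 4) := by
  have hlam' : lam ≠ 0 := hlam.ne'
  have hmem : ∀ θ ∈ Set.Ioo (lam * a) (lam * b), θ / lam ∈ Set.Ioo a b := by
    intro θ hθ
    constructor
    · rw [lt_div_iff₀ hlam]; linarith [mul_comm a lam, hθ.1]
    · rw [div_lt_iff₀ hlam]; linarith [mul_comm b lam, hθ.2]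
  refine ⟨fun θ => 1/lam^2 * (ψ (θ/lam) ^ (1/lam - 1) * ψ' (θ/lam)),
    fun θ => 1/lam^3 * ((1/lam - 1) * ψ (θ/lam) ^ (1/lam - 2) * (ψ' (θ/lam))^2
      + ψ (θ/lam) ^ (1/lam - 1) * ψ'' (θ/lam)), ?_, ?_, ?_, ?_, ?_⟩
  · intro θ hθ
    exact Real.rpow_pos_of_pos (hpos _ (hmem θ hθ)) _
  · intro θ hθ
    have hm := hmem θ hθ
    have hx := hpos _ hm
    have hinner : HasDerivAt (fun t => ψ (t / lam)) (ψ' (θ/lam) * (1/lam)) θ := by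
      have := (hd1 _ hm).comp θ ((hasDerivAt_id θ).div_const lam)
      simpa [Function.comp_def] using this
    have h2 := hinner.rpow_const (p := 1/lam) (Or.inl hx.ne')
    convert h2 using 1
    ring
  · intro θ hθ
    have hm := hmem θ hθ
    have hx := hpos _ hm
    have hinner : HasDerivAt (fun t => ψ (t / lam)) (ψ' (θ/lam) * (1/lam)) θ := by
      have := (hd1 _ hm).comp θ ((hasDerivAt_id θ).div_const lam)
      simpa [Function.comp_def] using this
    have hA := hinner.rpow_const (p := 1/lam - 1) (Or.inl hx.ne')
    have hC : HasDerivAt (fun t => ψ' (t / lam)) (ψ'' (θ/lam) * (1/lam)) θ := by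
      have := (hd2 _ hm).comp θ ((hasDerivAt_id θ).div_const lam)
      simpa [Function.comp_def] using this
    have h := (hA.mul hC).const_mul (1/lam^2)
    refine h.congr_deriv ?_
    beta_reduce
    rw [show (1/lam - 1 - 1 : ℝ) = 1/lam - 2 by ring]
    ring
  · intro θ hθ
    have hm := hmem θ hθ
    have hx := hpos _ hm
    have hode' := hode _ hm
    have hB' := hB _ hm
    have ht : lam⁻¹ * lam = 1 := inv_mul_cancel₀ hlam'
    beta_reduce
    set x := ψ (θ/lam) with hxdef
    set u := ψ' (θ/lam)
    set w := ψ'' (θ/lam)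
    have e1 : x ^ (1/lam - 1) = x ^ (1/lam - 2) * x := by
      rw [← Real.rpow_add_one hx.ne']; congr 1; ring
    have e2 : x ^ (1/lam) = x ^ (1/lam - 2) * x * x := by
      rw [← Real.rpow_add_one hx.ne', ← Real.rpow_add_one hx.ne']; congr 1; ring
    have e3 : x ^ (2/lam - 2) = x ^ (1/lam - 2) * x ^ (1/lam - 2) * x * x := by
      rw [← Real.rpow_add hx, ← Real.rpow_add_one hx.ne', ← Real.rpow_add_one hx.ne']
      congr 1; ring
    rw [e3] at hB'
    have h1 : (lam - 1) * (2*P + lam^2*x^2 + u^2) = lam^3*x^2 + lam*w*x := by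
      linear_combination hode'
    rw [← hB']
    simp only [e1, e2]
    set q := x ^ (1/lam - 2)
    linear_combination (lam⁻¹^5 * q^2 * x^2) * h1 +
      (-(q^2*x^2*(2*P + lam^2*x^2 + u^2)*lam⁻¹^4)
        + q^2*x^4*lam⁻¹^2*((lam⁻¹*lam)^2 + lam⁻¹*lam + 1)
        + q^2*x^3*w*lam⁻¹^4) * ht
  · intro θ hθ
    have hm := hmem θ hθ
    have hx := hpos _ hm
    have hB' := hB _ hm
    have ht : lam⁻¹ * lam = 1 := inv_mul_cancel₀ hlam'
    beta_reduce
    set x := ψ (θ/lam) with hxdef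
    set u := ψ' (θ/lam)
    have e1 : x ^ (1/lam - 1) = x ^ (1/lam - 2) * x := by
      rw [← Real.rpow_add_one hx.ne']; congr 1; ring
    have e2 : x ^ (1/lam) = x ^ (1/lam - 2) * x * x := by
      rw [← Real.rpow_add_one hx.ne', ← Real.rpow_add_one hx.ne']; congr 1; ring
    have e3 : x ^ (2/lam - 2) = x ^ (1/lam - 2) * x ^ (1/lam - 2) * x * x := by
      rw [← Real.rpow_add hx, ← Real.rpow_add_one hx.ne', ← Real.rpow_add_one hx.ne']
      congr 1; ring
    have e4 : (x ^ (1/lam)) ^ (2 / (1/lam) - 2) = x ^ (2 - 2/lam) := by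
      rw [← Real.rpow_mul hx.le]
      congr 1
      field_simp
    have e5 : x ^ (2 - 2/lam) * (x ^ (1/lam - 2) * x ^ (1/lam - 2) * x * x) = 1 := by
      rw [← e3, ← Real.rpow_add hx]
      norm_num
    rw [e3] at hB'
    rw [e4, ← hB']
    simp only [e1, e2]
    set q := x ^ (1/lam - 2)
    set r := x ^ (2 - 2/lam)
    linear_combination (-(2*P*lam⁻¹^4)) * e5 +
      (-(q^2*x^4*r*lam⁻¹^2*(lam⁻¹*lam + 1))) * ht
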